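/- If a connected cubic graph is 2-connected but has a 2-vertex disconnecting set, then it contains an edge cut of size 2 consisting of two non-adjacent edges (edges with no common endpoint). -/

import Mathlib

open SimpleGraph

section CubicTwoCutAux

variable {V : Type*} (G : SimpleGraph V)

private lemma reach_closed' {P : V → Prop} (hP : ∀ u v, P u → G.Adj u v → P v)
    {u v : V} (h : G.Reachable u v) (hu : P u) : P v := by
  obtain ⟨p⟩ := h
  induction p with
  | nil => exact hu
  | cons h q ih => exact ih (hP _ _ hu h)

private lemma reach_induce' {s : Set V} {u w : V} (p : G.Walk u w)
    (hs : ∀ z ∈ p.support, z ∈ s) (hu : u ∈ s) (hw : w ∈ s) :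
    (G.induce s).Reachable ⟨u, hu⟩ ⟨w, hw⟩ := by
  induction p with
  | nil => exact Reachable.refl _
  | @cons a b c h q ih =>
      have hb : b ∈ s := hs b (by simp [Walk.support_cons])
      have : (G.induce s).Adj ⟨a, hu⟩ ⟨b, hb⟩ := by simpa using h
      exact this.reachable.trans (ih (fun z hz => hs z (by simp [Walk.support_cons, hz])) hb hw)

/-- Every "side" `A` contains a neighbor of `y`, given that `G - x` is connected. -/
private lemma side_nbr (A : Set V) (x y : V)
    (closedA : ∀ v ∈ A, ∀ z, G.Adj v z → z = x ∨ z = y ∨ z ∈ A)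
    (hxA : x ∉ A) (hyA : y ∉ A) {u₀ : V} (hu : u₀ ∈ A)
    (hcx : (G.induce {u | u ≠ x}).Connected) (hyx : y ≠ x) :
    ∃ z ∈ A, G.Adj y z := by
  by_contra h
  push_neg at h
  have hux : u₀ ≠ x := fun e => hxA (e ▸ hu)
  have hr := hcx.preconnected ⟨u₀, hux⟩ ⟨y, hyx⟩
  have : (y : V) ∈ A := by
    refine reach_closed' _ (P := fun v : {u | u ≠ x} => (v : V) ∈ A) ?_ hr hu
    rintro ⟨v, hv⟩ ⟨z, hz⟩ hvA hadj
    have hadj' : G.Adj v z := by simpa using hadj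
    rcases closedA v hvA z hadj' with rfl | rfl | h'
    · exact absurd rfl hz
    · exact absurd hadj'.symm (h v hvA)
    · exact h'
  exact hyA this

/-- Covering lemma from degree 3: three distinct neighbors cover all neighbors. -/
private lemma cover3 [Finite V] {x : V} (h3 : (G.neighborSet x).ncard = 3)
    {z w v : V} (hz : G.Adj x z) (hw : G.Adj x w) (hv : G.Adj x v)
    (hzw : z ≠ w) (hzv : z ≠ v) (hwv : w ≠ v) :
    ∀ q, G.Adj x q → q = z ∨ q = w ∨ q = v := by
  have hsub : ({z, w, v} : Set V) ⊆ G.neighborSet x := by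
    rintro q (rfl | rfl | rfl) <;> assumption
  have hcard : ({z, w, v} : Set V).ncard = 3 :=
    Set.ncard_eq_three.mpr ⟨z, w, v, hzw, hzv, hwv, rfl⟩
  have := Set.eq_of_subset_of_ncard_le hsub (by rw [hcard, h3]) (Set.toFinite _)
  intro q hq
  have : q ∈ ({z, w, v} : Set V) := this ▸ hq
  simpa using this

/-- Case: side `A` has unique `x`-neighbor `a` and unique `y`-neighbor `b` with `a ≠ b`. -/
private lemma caseL1 (A : Set V) (x y a b : V)
    (closedA : ∀ v ∈ A, ∀ z, G.Adj v z → z = x ∨ z = y ∨ z ∈ A)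
    (hxA : x ∉ A) (ha : a ∈ A)
    (huniqa : ∀ v ∈ A, G.Adj x v → v = a) (huniqb : ∀ v ∈ A, G.Adj y v → v = b) :
    ¬ (G.deleteEdges {s(x, a), s(y, b)}).Connected := by
  intro hc
  have hr := hc.preconnected a x
  have : x ∈ A := by
    refine reach_closed' _ (P := fun v => v ∈ A) ?_ hr ha
    intro u v hu hadj
    rw [deleteEdges_adj] at hadj
    obtain ⟨hadj, he⟩ := hadj
    rcases closedA u hu v hadj with rfl | rfl | h'
    · exact absurd (by rw [huniqa u hu hadj.symm]; left; exact Sym2.eq_swap) he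
    · exact absurd (by rw [huniqb u hu hadj.symm]; right; exact Sym2.eq_swap ▸ rfl) he
    · exact h'
  exact hxA this

/-- Case: both unique attachment points coincide, giving a cut vertex: contradiction. -/
private lemma caseL2 (A : Set V) (x y a : V) (hxy : x ≠ y)
    (closedA : ∀ v ∈ A, ∀ z, G.Adj v z → z = x ∨ z = y ∨ z ∈ A)
    (hxA : x ∉ A) (ha : a ∈ A)
    (hax : G.Adj x a) (hay : G.Adj y a)
    (huniqa : ∀ v ∈ A, G.Adj x v → v = a) (huniqb : ∀ v ∈ A, G.Adj y v → v = a)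
    (h3 : (G.neighborSet a).ncard = 3)
    (hca : (G.induce {u | u ≠ a}).Connected) : False := by
  obtain ⟨c1, c2, c3, h12, h13, h23, hN⟩ := Set.ncard_eq_three.mp h3
  have hx' : x ∈ ({c1, c2, c3} : Set V) := hN ▸ hax.symm
  have hy' : y ∈ ({c1, c2, c3} : Set V) := hN ▸ hay.symm
  have ht : ∃ t, G.Adj a t ∧ t ≠ x ∧ t ≠ y := by
    have m1 : G.Adj a c1 := by rw [← SimpleGraph.mem_neighborSet, hN]; simp
    have m2 : G.Adj a c2 := by rw [← SimpleGraph.mem_neighborSet, hN]; simp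
    have m3 : G.Adj a c3 := by rw [← SimpleGraph.mem_neighborSet, hN]; simp
    simp only [Set.mem_insert_iff, Set.mem_singleton_iff] at hx' hy'
    rcases hx' with rfl | rfl | rfl <;> rcases hy' with rfl | rfl | rfl <;>
      first
        | exact absurd rfl hxy
        | exact ⟨c1, m1, by tauto, by tauto⟩
        | exact ⟨c2, m2, by tauto, by tauto⟩
        | exact ⟨c3, m3, by tauto, by tauto⟩
  obtain ⟨t, hat, htx, hty⟩ := ht
  have htA : t ∈ A := by
    rcases closedA a ha t hat with rfl | rfl | h' <;>
      first | exact absurd rfl htx | exact absurd rfl hty | exact h'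
  have hta : t ≠ a := fun e => G.irrefl (e ▸ hat)
  have hxa : x ≠ a := fun e => hxA (e ▸ ha)
  have hr := hca.preconnected ⟨t, hta⟩ ⟨x, hxa⟩
  have : (x : V) ∈ A := by
    refine reach_closed' _ (P := fun v : {u | u ≠ a} => (v : V) ∈ A) ?_ hr htA
    rintro ⟨v, hv⟩ ⟨z, hz⟩ hvA hadj
    have hadj' : G.Adj v z := by simpa using hadj
    rcases closedA v hvA z hadj' with rfl | rfl | h'
    · exact absurd (huniqa _ hvA hadj'.symm) hv
    · exact absurd (huniqb _ hvA hadj'.symm) hv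
    · exact h'
  exact hxA this

/-- Case: `x` has a unique neighbor `a'` outside `A`, `y` a unique neighbor `b` inside `A`. -/
private lemma caseL3 (A : Set V) (x y a' b : V) (hxy : x ≠ y)
    (closedA : ∀ v ∈ A, ∀ z, G.Adj v z → z = x ∨ z = y ∨ z ∈ A)
    (hyA : y ∉ A)
    (huniqb : ∀ v ∈ A, G.Adj y v → v = b)
    (hcov : ∀ z, G.Adj x z → z = a' ∨ z ∈ A) :
    ¬ (G.deleteEdges {s(x, a'), s(y, b)}).Connected := by
  intro hc
  have hr := hc.preconnected x y
  have hPy : y ∈ A ∨ y = x := by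
    refine reach_closed' _ (P := fun v => v ∈ A ∨ v = x) ?_ hr (Or.inr rfl)
    rintro u v (hu | rfl) hadj <;> rw [deleteEdges_adj] at hadj <;> obtain ⟨hadj, he⟩ := hadj
    · rcases closedA u hu v hadj with rfl | rfl | h'
      · exact Or.inr rfl
      · exact absurd (by rw [huniqb u hu hadj.symm]; right; exact Sym2.eq_swap ▸ rfl) he
      · exact Or.inl h'
    · rcases hcov v hadj with rfl | h'
      · exact absurd (by left; rfl) he
      · exact Or.inl h'
  rcases hPy with h | h
  · exact hyA h
  · exact hxy h.symm

end CubicTwoCutAux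

/-- If a connected cubic graph has no cut vertex but has a 2-vertex disconnecting set,
then it has an edge cut of size two consisting of two non-adjacent edges. -/
theorem cubic_two_cut {V : Type*} [Fintype V] (G : SimpleGraph V)
    (hconn : G.Connected) (hreg : ∀ v, (G.neighborSet v).ncard = 3)
    (h2conn : ∀ v : V, (G.induce {u | u ≠ v}).Connected)
    (hcut : ∃ x y : V, x ≠ y ∧ ¬ (G.induce {u | u ≠ x ∧ u ≠ y}).Connected) :
    ∃ a b c d : V, G.Adj a b ∧ G.Adj c d ∧
      a ≠ c ∧ a ≠ d ∧ b ≠ c ∧ b ≠ d ∧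
      ¬ (G.deleteEdges {s(a, b), s(c, d)}).Connected := by
  classical
  obtain ⟨x, y, hxy, hcut⟩ := hcut
  -- a neighbor of x different from y
  obtain ⟨n1, n2, n3, h12, h13, h23, hN⟩ := Set.ncard_eq_three.mp (hreg x)
  have hn1 : G.Adj x n1 := by rw [← SimpleGraph.mem_neighborSet, hN]; simp
  have hn2 : G.Adj x n2 := by rw [← SimpleGraph.mem_neighborSet, hN]; simp
  have hu' : ∃ u', G.Adj x u' ∧ u' ≠ y := by
    by_cases h : n1 = y
    · exact ⟨n2, hn2, fun e => h12 (h.trans e.symm)⟩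
    · exact ⟨n1, hn1, h⟩
  obtain ⟨u', hu'adj, hu'y⟩ := hu'
  have hu'x : u' ≠ x := fun e => G.irrefl (e ▸ hu'adj)
  haveI : Nonempty {u | u ≠ x ∧ u ≠ y} := ⟨⟨u', hu'x, hu'y⟩⟩
  have hnp : ¬ (G.induce {u | u ≠ x ∧ u ≠ y}).Preconnected := fun hp => hcut ⟨hp⟩
  unfold SimpleGraph.Preconnected at hnp
  push_neg at hnp
  obtain ⟨⟨u₀, hu₀x, hu₀y⟩, ⟨w₀, hw₀x, hw₀y⟩, hnr⟩ := hnp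
  -- the two sides
  set R : V → Prop := fun v => ∃ p : G.Walk u₀ v, ∀ z ∈ p.support, z ≠ x ∧ z ≠ y with hR
  set A : Set V := {v | (v ≠ x ∧ v ≠ y) ∧ R v} with hA
  set B : Set V := {v | (v ≠ x ∧ v ≠ y) ∧ ¬ R v} with hB
  have hu₀A : u₀ ∈ A := by
    refine ⟨⟨hu₀x, hu₀y⟩, Walk.nil, ?_⟩
    intro z hz
    rw [Walk.support_nil, List.mem_singleton] at hz
    exact hz ▸ ⟨hu₀x, hu₀y⟩
  have hRstep : ∀ v z, R v → G.Adj v z → z ≠ x → z ≠ y → R z := by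
    rintro v z ⟨p, hp⟩ hadj hzx hzy
    refine ⟨p.concat hadj, ?_⟩
    intro q hq
    rw [Walk.support_concat] at hq
    rcases List.mem_append.mp hq with h | h
    · exact hp q h
    · rw [List.mem_singleton] at h
      exact h ▸ ⟨hzx, hzy⟩
  have closedA : ∀ v ∈ A, ∀ z, G.Adj v z → z = x ∨ z = y ∨ z ∈ A := by
    rintro v ⟨⟨hvx, hvy⟩, hRv⟩ z hadj
    by_cases hzx : z = x
    · exact Or.inl hzx
    by_cases hzy : z = y
    · exact Or.inr (Or.inl hzy)
    exact Or.inr (Or.inr ⟨⟨hzx, hzy⟩, hRstep v z hRv hadj hzx hzy⟩)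
  have closedB : ∀ v ∈ B, ∀ z, G.Adj v z → z = x ∨ z = y ∨ z ∈ B := by
    rintro v ⟨⟨hvx, hvy⟩, hRv⟩ z hadj
    by_cases hzx : z = x
    · exact Or.inl hzx
    by_cases hzy : z = y
    · exact Or.inr (Or.inl hzy)
    refine Or.inr (Or.inr ⟨⟨hzx, hzy⟩, fun hRz => hRv ?_⟩)
    exact hRstep z v hRz hadj.symm hvx hvy
  have hxA : x ∉ A := fun h => h.1.1 rfl
  have hyA : y ∉ A := fun h => h.1.2 rfl
  have hxB : x ∉ B := fun h => h.1.1 rfl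
  have hyB : y ∉ B := fun h => h.1.2 rfl
  have hdisj : ∀ v, v ∈ A → v ∈ B → False := fun v hvA hvB => hvB.2 hvA.2
  have hw₀B : w₀ ∈ B := by
    refine ⟨⟨hw₀x, hw₀y⟩, ?_⟩
    rintro ⟨p, hp⟩
    exact hnr (reach_induce' G p (fun z hz => hp z hz) ⟨hu₀x, hu₀y⟩ ⟨hw₀x, hw₀y⟩)
  -- swapped closures
  have closedA' : ∀ v ∈ A, ∀ z, G.Adj v z → z = y ∨ z = x ∨ z ∈ A := by
    intro v hv z hz; rcases closedA v hv z hz with h | h | h <;> tauto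
  have closedB' : ∀ v ∈ B, ∀ z, G.Adj v z → z = y ∨ z = x ∨ z ∈ B := by
    intro v hv z hz; rcases closedB v hv z hz with h | h | h <;> tauto
  -- nonempty attachments
  obtain ⟨bA, hbA, hbAy⟩ := side_nbr G A x y closedA hxA hyA hu₀A (h2conn x) (Ne.symm hxy)
  obtain ⟨aA, haA, haAx⟩ := side_nbr G A y x closedA' hyA hxA hu₀A (h2conn y) hxy
  obtain ⟨bB, hbB, hbBy⟩ := side_nbr G B x y closedB hxB hyB hw₀B (h2conn x) (Ne.symm hxy)
  obtain ⟨aB, haB, haBx⟩ := side_nbr G B y x closedB' hyB hxB hw₀B (h2conn y) hxy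
  -- uniqueness properties
  set UAx : Prop := ∀ v ∈ A, ∀ w ∈ A, G.Adj x v → G.Adj x w → v = w with hUAx
  set UAy : Prop := ∀ v ∈ A, ∀ w ∈ A, G.Adj y v → G.Adj y w → v = w with hUAy
  set UBx : Prop := ∀ v ∈ B, ∀ w ∈ B, G.Adj x v → G.Adj x w → v = w with hUBx
  set UBy : Prop := ∀ v ∈ B, ∀ w ∈ B, G.Adj y v → G.Adj y w → v = w with hUBy
  by_cases h1 : UAx ∧ UAy
  · -- both unique on side A
    obtain ⟨hax, hay⟩ := h1
    by_cases hab : aA = bA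
    · exact absurd (caseL2 G A x y aA hxy closedA hxA haA haAx (hab ▸ hbAy) 
        (fun v hv h => hax v hv aA haA h haAx) (fun v hv h => hay v hv aA haA h (hab ▸ hbAy))
        (hreg aA) (h2conn aA)) not_false
    · refine ⟨x, aA, y, bA, haAx, hbAy, hxy, fun e => hxA (e ▸ hbA), 
        fun e => hyA (e ▸ haA), hab, ?_⟩
      exact caseL1 G A x y aA bA closedA hxA haA 
        (fun v hv h => hax v hv aA haA h haAx) (fun v hv h => hay v hv bA hbA h hbAy)
  by_cases h2 : UBx ∧ UBy
  · obtain ⟨hbx, hby⟩ := h2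
    by_cases hab : aB = bB
    · exact absurd (caseL2 G B x y aB hxy closedB hxB haB haBx (hab ▸ hbBy)
        (fun v hv h => hbx v hv aB haB h haBx) (fun v hv h => hby v hv aB haB h (hab ▸ hbBy))
        (hreg aB) (h2conn aB)) not_false
    · refine ⟨x, aB, y, bB, haBx, hbBy, hxy, fun e => hxB (e ▸ hbB),
        fun e => hyB (e ▸ haB), hab, ?_⟩
      exact caseL1 G B x y aB bB closedB hxB haB
        (fun v hv h => hbx v hv aB haB h haBx) (fun v hv h => hby v hv bB hbB h hbBy)
  -- neither side has both unique: mixed case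
  rcases not_and_or.mp h1 with hnAx | hnAy
  · -- two x-neighbors in A
    rw [hUAx] at hnAx
    push_neg at hnAx
    obtain ⟨v, hv, w, hw, hxv, hxw, hvw⟩ := hnAx
    have hvaB : v ≠ aB := fun e => hdisj v hv (e ▸ haB)
    have hwaB : w ≠ aB := fun e => hdisj w hw (e ▸ haB)
    have cover := cover3 G (hreg x) hxv hxw haBx hvw hvaB hwaB
    have hUBx' : UBx := by
      intro p hp q hq hxp hxq
      have hp' : p = aB := by
        rcases cover p hxp with rfl | rfl | rfl
        · exact absurd hp (fun h => hdisj p hv h)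
        · exact absurd hp (fun h => hdisj p hw h)
        · rfl
      have hq' : q = aB := by
        rcases cover q hxq with rfl | rfl | rfl
        · exact absurd hq (fun h => hdisj q hv h)
        · exact absurd hq (fun h => hdisj q hw h)
        · rfl
      rw [hp', hq']
    have hnBy : ¬ UBy := fun h => h2 ⟨hUBx', h⟩
    rw [hUBy] at hnBy
    push_neg at hnBy
    obtain ⟨p, hp, q, hq, hyp, hyq, hpq⟩ := hnBy
    have hpbA : p ≠ bA := fun e => hdisj p (e ▸ hbA) hp
    have hqbA : q ≠ bA := fun e => hdisj q (e ▸ hbA) hq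
    have cover2 := cover3 G (hreg y) hyp hyq hbAy hpq hpbA hqbA
    have huniqb : ∀ v' ∈ A, G.Adj y v' → v' = bA := by
      intro v' hv' hyv'
      rcases cover2 v' hyv' with rfl | rfl | rfl
      · exact absurd hp (fun h => hdisj v' hv' h)
      · exact absurd hq (fun h => hdisj v' hv' h)
      · rfl
    have hcov : ∀ z, G.Adj x z → z = aB ∨ z ∈ A := by
      intro z hz
      rcases cover z hz with rfl | rfl | rfl
      · exact Or.inr hv
      · exact Or.inr hw
      · exact Or.inl rfl
    refine ⟨x, aB, y, bA, haBx, hbAy, hxy, fun e => hxA (e ▸ hbA),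
      fun e => hyB (e ▸ haB), fun e => hdisj aB (e ▸ hbA) haB, ?_⟩
    exact caseL3 G A x y aB bA hxy closedA hyA huniqb hcov
  · -- two y-neighbors in A: symmetric, swap roles of x and y
    rw [hUAy] at hnAy
    push_neg at hnAy
    obtain ⟨v, hv, w, hw, hyv, hyw, hvw⟩ := hnAy
    have hvbB : v ≠ bB := fun e => hdisj v hv (e ▸ hbB)
    have hwbB : w ≠ bB := fun e => hdisj w hw (e ▸ hbB)
    have cover := cover3 G (hreg y) hyv hyw hbBy hvw hvbB hwbB
    have hUBy' : UBy := by
      intro p hp q hq hyp hyq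
      have hp' : p = bB := by
        rcases cover p hyp with rfl | rfl | rfl
        · exact absurd hp (fun h => hdisj p hv h)
        · exact absurd hp (fun h => hdisj p hw h)
        · rfl
      have hq' : q = bB := by
        rcases cover q hyq with rfl | rfl | rfl
        · exact absurd hq (fun h => hdisj q hv h)
        · exact absurd hq (fun h => hdisj q hw h)
        · rfl
      rw [hp', hq']
    have hnBx : ¬ UBx := fun h => h2 ⟨h, hUBy'⟩
    rw [hUBx] at hnBx
    push_neg at hnBx
    obtain ⟨p, hp, q, hq, hxp, hxq, hpq⟩ := hnBx
    have hpaA : p ≠ aA := fun e => hdisj p (e ▸ haA) hp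
    have hqaA : q ≠ aA := fun e => hdisj q (e ▸ haA) hq
    have cover2 := cover3 G (hreg x) hxp hxq haAx hpq hpaA hqaA
    have huniqb : ∀ v' ∈ A, G.Adj x v' → v' = aA := by
      intro v' hv' hxv'
      rcases cover2 v' hxv' with rfl | rfl | rfl
      · exact absurd hp (fun h => hdisj v' hv' h)
      · exact absurd hq (fun h => hdisj v' hv' h)
      · rfl
    have hcov : ∀ z, G.Adj y z → z = bB ∨ z ∈ A := by
      intro z hz
      rcases cover z hz with rfl | rfl | rfl
      · exact Or.inr hv
      · exact Or.inr hw
      · exact Or.inl rfl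
    refine ⟨y, bB, x, aA, hbBy, haAx, Ne.symm hxy, fun e => hyA (e ▸ haA),
      fun e => hxB (e ▸ hbB), fun e => hdisj bB (e ▸ haA) hbB, ?_⟩
    exact caseL3 G A y x bB aA (Ne.symm hxy) closedA' hxA huniqb hcov
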